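/- For the cycle graph C_n on n ≥ 3 vertices: for ℓ = 0 or ℓ = 1 the ℓ-leaky forcing number is 2, and for every ℓ ≥ 2 the ℓ-leaky forcing number is n. -/

import Mathlib

open SimpleGraph

namespace LF

variable {V : Type*}

/-- Vertices eventually forced blue, starting from `S`, with leak set `L`:
a blue vertex not in `L` whose every neighbor other than `w` is blue forces `w`. -/
inductive Forced (G : SimpleGraph V) (L S : Set V) : V → Prop
  | init (v : V) (hv : v ∈ S) : Forced G L S v
  | force (b w : V) (hb : Forced G L S b) (hbL : b ∉ L) (hadj : G.Adj b w)
      (hall : ∀ u, G.Adj b u → u ≠ w → Forced G L S u) : Forced G L S w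

/-- `S` is an ℓ-leaky forcing set of `G`. -/
def IsLeakyForcingSet (G : SimpleGraph V) (ℓ : ℕ) (S : Set V) : Prop :=
  ∀ L : Set V, L.ncard ≤ ℓ → ∀ v, Forced G L S v

/-- The ℓ-leaky forcing number `Z_{(ℓ)}(G)`. -/
noncomputable def leakyForcingNumber (G : SimpleGraph V) [Fintype V] (ℓ : ℕ) : ℕ :=
  sInf {k | ∃ S : Finset V, S.card = k ∧ IsLeakyForcingSet G ℓ ↑S}

/-- An ℓ-leaky fort: a nonempty set `F` such that at most ℓ vertices outside `F`
have exactly one neighbor in `F`. -/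
def IsLeakyFort (G : SimpleGraph V) (ℓ : ℕ) (F : Set V) : Prop :=
  F.Nonempty ∧ {v | v ∉ F ∧ ∃! u, u ∈ F ∧ G.Adj v u}.ncard ≤ ℓ

/-- The path graph on `n` vertices. -/
def pathGraph (n : ℕ) : SimpleGraph (Fin n) :=
  SimpleGraph.fromRel (fun i j => i.val + 1 = j.val)

/-- The cycle graph on `n` vertices. -/
def cycleGraph (n : ℕ) : SimpleGraph (Fin n) :=
  SimpleGraph.fromRel (fun i j => (i.val + 1) % n = j.val)

/-- The star graph on `n` vertices, with center `0`. -/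
def starGraph (n : ℕ) : SimpleGraph (Fin n) :=
  SimpleGraph.fromRel (fun i _ => i.val = 0)

/-- The generalized Petersen graph `P(n,k)`: `Sum.inl i` is the inner vertex `x_{i+1}`,
`Sum.inr i` is the outer vertex `y_{i+1}` (0-indexed). -/
def petersen (n k : ℕ) : SimpleGraph (Fin n ⊕ Fin n) :=
  SimpleGraph.fromRel (fun a b =>
    match a, b with
    | Sum.inr i, Sum.inr j => (i.val + 1) % n = j.val
    | Sum.inl i, Sum.inr j => i = j
    | Sum.inl i, Sum.inl j => (i.val + k) % n = j.val
    | _, _ => False)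

end LF

set_option linter.unusedSectionVars false

namespace LFP
open LF
open Fin.NatCast

variable {n : ℕ} [NeZero n]

lemma val_one (hn : 3 ≤ n) : ((1 : Fin n)).val = 1 := by
  rw [Fin.val_one']; exact Nat.mod_eq_of_lt (by omega)

lemma one_ne_zero' (hn : 3 ≤ n) : (1 : Fin n) ≠ 0 := by
  intro h
  have := congrArg Fin.val h
  rw [val_one hn] at this
  simp at this

lemma adj_iff (hn : 3 ≤ n) (a b : Fin n) :
    (LF.cycleGraph n).Adj a b ↔ a ≠ b ∧ (b = a + 1 ∨ a = b + 1) := by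
  have key : ∀ x y : Fin n, ((x.val + 1) % n = y.val) ↔ y = x + 1 := by
    intro x y
    rw [Fin.ext_iff, Fin.val_add, val_one hn, eq_comm]
  simp only [LF.cycleGraph, SimpleGraph.fromRel_adj, key]

lemma adj_cases (hn : 3 ≤ n) {b u : Fin n} (h : (LF.cycleGraph n).Adj b u) :
    u = b + 1 ∨ u = b - 1 := by
  rcases (adj_iff hn b u).1 h with ⟨-, h | h⟩
  · exact Or.inl h
  · exact Or.inr (eq_sub_of_add_eq h.symm)

lemma adj_succ (hn : 3 ≤ n) (a : Fin n) : (LF.cycleGraph n).Adj a (a + 1) := by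
  refine (adj_iff hn _ _).2 ⟨fun h => one_ne_zero' hn (left_eq_add.mp h), Or.inl rfl⟩

lemma adj_pred (hn : 3 ≤ n) (a : Fin n) : (LF.cycleGraph n).Adj a (a - 1) := by
  have := (adj_succ hn (a - 1)).symm
  rwa [sub_add_cancel] at this

lemma succ_ne_self (hn : 3 ≤ n) (a : Fin n) : a + 1 ≠ a := by
  intro h
  exact one_ne_zero' hn (left_eq_add.mp h.symm)

lemma pred_ne_self (hn : 3 ≤ n) (a : Fin n) : a - 1 ≠ a := by
  intro h
  exact one_ne_zero' hn (sub_eq_self.mp h)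

lemma pred_ne_succ (hn : 3 ≤ n) (a : Fin n) : a - 1 ≠ a + 1 := by
  intro h
  have h2 : a = a + 1 + 1 := by
    conv_lhs => rw [← sub_add_cancel a 1, h]
  rw [add_assoc] at h2
  have h3 : (1 : Fin n) + 1 = 0 := (left_eq_add.mp h2)
  have h4 := congrArg Fin.val h3
  rw [Fin.val_add, val_one hn, Fin.val_zero, Nat.mod_eq_of_lt (by omega)] at h4
  omega

lemma force_step (hn : 3 ≤ n) {L S : Set (Fin n)} {a : Fin n}
    (ha : Forced (LF.cycleGraph n) L S a) (hb : Forced (LF.cycleGraph n) L S (a + 1))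
    (hL : a + 1 ∉ L) : Forced (LF.cycleGraph n) L S (a + 1 + 1) := by
  refine Forced.force (a + 1) (a + 1 + 1) hb hL (adj_succ hn _) ?_
  intro u hu hne
  rcases adj_cases hn hu with h | h
  · exact absurd h hne
  · rw [h, add_sub_cancel_right]; exact ha

lemma force_step' (hn : 3 ≤ n) {L S : Set (Fin n)} {a : Fin n}
    (ha : Forced (LF.cycleGraph n) L S a) (hb : Forced (LF.cycleGraph n) L S (a + 1))
    (hL : a ∉ L) : Forced (LF.cycleGraph n) L S (a - 1) := by
  refine Forced.force a (a - 1) ha hL (adj_pred hn _) ?_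
  intro u hu hne
  rcases adj_cases hn hu with h | h
  · rw [h]; exact hb
  · exact absurd h hne

lemma cast_succ {a b : ℕ} (h : a + 1 = b) : ((a : Fin n)) + 1 = (b : Fin n) := by
  subst h; push_cast; ring

lemma fwd (hn : 3 ≤ n) {L : Set (Fin n)} :
    ∀ k, k < n → (∀ j, 0 < j → j < k → ((j : Fin n)) ∉ L) →
      Forced (LF.cycleGraph n) L {0, 1} ((k : ℕ) : Fin n) := by
  intro k
  induction k using Nat.strong_induction_on with
  | _ k ih =>
    match k with
    | 0 => exact fun _ _ => Forced.init _ (by simp)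
    | 1 => exact fun _ _ => Forced.init _ (by simp)
    | (k+2) =>
      intro hk hleak
      have h1 : Forced (LF.cycleGraph n) L {0,1} ((k : ℕ) : Fin n) :=
        ih k (by omega) (by omega) (fun j hj1 hj2 => hleak j hj1 (by omega))
      have h2 : Forced (LF.cycleGraph n) L {0,1} (((k+1 : ℕ)) : Fin n) :=
        ih (k+1) (by omega) (by omega) (fun j hj1 hj2 => hleak j hj1 (by omega))
      have hc1 : (((k+1 : ℕ)) : Fin n) = ((k:ℕ) : Fin n) + 1 := (cast_succ rfl).symm
      have hc2 : (((k+2 : ℕ)) : Fin n) = ((k:ℕ) : Fin n) + 1 + 1 := by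
        rw [← cast_succ (a := k+1) rfl, ← hc1]
      rw [hc2]
      exact force_step hn h1 (hc1 ▸ h2) (by rw [← hc1]; exact hleak (k+1) (by omega) (by omega))

lemma bwd (hn : 3 ≤ n) {L : Set (Fin n)} (h0 : (0 : Fin n) ∉ L) :
    ∀ d, d ≤ n - 2 → (∀ j, n - 1 - d < j → j < n → ((j : Fin n)) ∉ L) →
      Forced (LF.cycleGraph n) L {0, 1} (((n - 1 - d : ℕ)) : Fin n) := by
  have base0 : ∀ j : ℕ, ((j : Fin n)) + 1 = ((j+1 : ℕ) : Fin n) := fun j => cast_succ rfl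
  intro d
  induction d using Nat.strong_induction_on with
  | _ d ih =>
    match d with
    | 0 =>
      intro _ _
      have hcast : ((n - 1 - 0 : ℕ) : Fin n) = (0 : Fin n) - 1 := by
        refine eq_sub_of_add_eq ?_
        rw [base0, Nat.sub_zero, Nat.sub_add_cancel (by omega), Fin.natCast_self]
      rw [hcast]
      refine force_step' hn (Forced.init 0 (by simp)) ?_ h0
      rw [zero_add]; exact Forced.init 1 (by simp)
    | 1 =>
      intro hd hleak
      -- target : n - 2 ; forcer a = n - 1
      have ha : Forced (LF.cycleGraph n) L {0,1} (((n-1-0 : ℕ)) : Fin n) :=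
        ih 0 (by omega) (by omega) (fun j h1 h2 => hleak j (by omega) h2)
      rw [Nat.sub_zero] at ha
      have hb : (((n-1 : ℕ)) : Fin n) + 1 = 0 := by
        rw [base0, Nat.sub_add_cancel (by omega), Fin.natCast_self]
      have hforced := force_step' hn ha (by rw [hb]; exact Forced.init 0 (by simp))
        (hleak (n-1) (by omega) (by omega))
      have hcast : ((n - 1 - 1 : ℕ) : Fin n) = (((n-1:ℕ)) : Fin n) - 1 := by
        refine eq_sub_of_add_eq ?_
        rw [base0]; congr 1; omega
      rw [hcast]; exact hforced
    | (d+2) =>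
      intro hd hleak
      -- target : n-1-(d+2) = n-3-d ; forcer a = n-2-d = n-1-(d+1)
      have ha : Forced (LF.cycleGraph n) L {0,1} (((n-1-(d+1) : ℕ)) : Fin n) :=
        ih (d+1) (by omega) (by omega) (fun j h1 h2 => hleak j (by omega) h2)
      have hb : Forced (LF.cycleGraph n) L {0,1} (((n-1-d : ℕ)) : Fin n) :=
        ih d (by omega) (by omega) (fun j h1 h2 => hleak j (by omega) h2)
      have hsucc : (((n-1-(d+1) : ℕ)) : Fin n) + 1 = (((n-1-d : ℕ)) : Fin n) := by
        rw [base0]; congr 1; omega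
      have hforced := force_step' hn ha (by rw [hsucc]; exact hb)
        (hleak (n-1-(d+1)) (by omega) (by omega))
      have hcast : ((n - 1 - (d+2) : ℕ) : Fin n) = (((n-1-(d+1):ℕ)) : Fin n) - 1 := by
        refine eq_sub_of_add_eq ?_
        rw [base0]; congr 1; omega
      rw [hcast]; exact hforced

lemma main_force (hn : 3 ≤ n) {L : Set (Fin n)} (hL : L.Subsingleton) (v : Fin n) :
    Forced (LF.cycleGraph n) L {0, 1} v := by
  have hv : v = ((v.val : ℕ) : Fin n) := (Fin.cast_val_eq_self v).symm
  rw [hv]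
  have hkn : v.val < n := v.isLt
  by_cases hcase : ∀ j, 0 < j → j < v.val → ((j : Fin n)) ∉ L
  · exact fwd hn v.val hkn hcase
  · push_neg at hcase
    obtain ⟨j0, hj0pos, hj0k, hj0L⟩ := hcase
    have hj0n : j0 < n := by omega
    have hj0val : ((j0 : Fin n)).val = j0 := by rw [Fin.val_natCast]; exact Nat.mod_eq_of_lt hj0n
    have h0 : (0 : Fin n) ∉ L := by
      intro h
      have he := hL h hj0L
      have := congrArg Fin.val he
      rw [hj0val, Fin.val_zero] at this
      omega
    have hres := bwd hn h0 (n - 1 - v.val) (by omega) ?_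
    · have : n - 1 - (n - 1 - v.val) = v.val := by omega
      rwa [this] at hres
    · intro j hj1 hj2 hjL
      have hjval : ((j : Fin n)).val = j := by rw [Fin.val_natCast]; exact Nat.mod_eq_of_lt hj2
      have he := hL hjL hj0L
      have := congrArg Fin.val he
      rw [hjval, hj0val] at this
      omega

lemma forced_empty_mem (hn : 3 ≤ n) {S : Set (Fin n)} (hS : S.Subsingleton) :
    ∀ v, Forced (LF.cycleGraph n) ∅ S v → v ∈ S := by
  intro v h
  induction h with
  | init v hv => exact hv
  | force b w hb hbL hadj hall ihb ihall =>
    exfalso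
    rcases adj_cases hn hadj with hw | hw
    · have hu : b - 1 ∈ S := ihall (b-1) (adj_pred hn b) (by rw [hw]; exact pred_ne_succ hn b)
      exact pred_ne_self hn b (hS hu ihb)
    · have hu : b + 1 ∈ S := ihall (b+1) (adj_succ hn b)
        (by rw [hw]; exact fun h => pred_ne_succ hn b h.symm)
      exact succ_ne_self hn b (hS hu ihb)

lemma forced_ne (hn : 3 ≤ n) {S : Set (Fin n)} {v : Fin n} (hv : v ∉ S) :
    ∀ w, Forced (LF.cycleGraph n) {v + 1, v - 1} S w → w ≠ v := by
  intro w h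
  induction h with
  | init w hw => rintro rfl; exact hv hw
  | force b w hb hbL hadj hall ihb ihall =>
    rintro rfl
    rcases adj_cases hn hadj.symm with h | h
    · exact hbL (Or.inl h)
    · exact hbL (Or.inr h)

lemma card_two (hn : 3 ≤ n) : ({0, 1} : Finset (Fin n)).card = 2 := by
  rw [Finset.card_insert_of_notMem (by simp [(one_ne_zero' hn).symm])]
  simp

lemma good (hn : 3 ≤ n) :
    IsLeakyForcingSet (LF.cycleGraph n) 1 (↑({0, 1} : Finset (Fin n))) := by
  intro L hcard v
  have hsub : L.Subsingleton := by
    intro a ha b hb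
    exact (Set.ncard_le_one (Set.toFinite L)).mp hcard a ha b hb
  have h := main_force hn hsub v
  have hco : (↑({0, 1} : Finset (Fin n)) : Set (Fin n)) = {0, 1} := by simp
  rwa [hco]

lemma lower2 (hn : 3 ≤ n) {S : Finset (Fin n)}
    (hS : IsLeakyForcingSet (LF.cycleGraph n) 0 ↑S) : 2 ≤ S.card := by
  by_contra h
  push_neg at h
  have hc1 : S.card ≤ 1 := by omega
  have hsub : (↑S : Set (Fin n)).Subsingleton := by
    intro a ha b hb
    exact Finset.card_le_one.mp hc1 a (by simpa using ha) b (by simpa using hb)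
  have hall := hS ∅ (by simp)
  have hmem : ∀ v, v ∈ S := fun v => by
    simpa using forced_empty_mem hn hsub v (hall v)
  have hle := Finset.card_le_card (fun v _ => hmem v : Finset.univ ⊆ S)
  rw [Finset.card_univ, Fintype.card_fin] at hle
  omega

lemma leaky_univ (ℓ : ℕ) :
    IsLeakyForcingSet (LF.cycleGraph n) ℓ ↑(Finset.univ : Finset (Fin n)) :=
  fun _ _ v => Forced.init v (by simp)

lemma lowern (hn : 3 ≤ n) {ℓ : ℕ} (hℓ : 2 ≤ ℓ) {S : Finset (Fin n)}
    (hS : IsLeakyForcingSet (LF.cycleGraph n) ℓ ↑S) : n ≤ S.card := by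
  have huniv : ∀ v : Fin n, v ∈ S := by
    intro v
    by_contra hv
    have hcard : ({v + 1, v - 1} : Set (Fin n)).ncard ≤ ℓ := by
      refine le_trans (le_trans (Set.ncard_insert_le _ _) ?_) hℓ
      rw [Set.ncard_singleton]
    have hforced := hS {v + 1, v - 1} hcard v
    exact forced_ne hn (by simpa using hv) v hforced rfl
  have hle := Finset.card_le_card (fun v _ => huniv v : Finset.univ ⊆ S)
  rwa [Finset.card_univ, Fintype.card_fin] at hle

end LFP

theorem stmt4 (n : ℕ) (hn : 3 ≤ n) :
    LF.leakyForcingNumber (LF.cycleGraph n) 0 = 2 ∧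
    LF.leakyForcingNumber (LF.cycleGraph n) 1 = 2 ∧
    ∀ ℓ, 2 ≤ ℓ → LF.leakyForcingNumber (LF.cycleGraph n) ℓ = n := by
  haveI : NeZero n := ⟨by omega⟩
  have good1 := LFP.good (n := n) hn
  have good0 : LF.IsLeakyForcingSet (LF.cycleGraph n) 0 (↑({0,1} : Finset (Fin n))) :=
    fun L h v => good1 L (by omega) v
  refine ⟨?_, ?_, ?_⟩
  · have mem2 : 2 ∈ {k | ∃ S : Finset (Fin n), S.card = k ∧
        LF.IsLeakyForcingSet (LF.cycleGraph n) 0 ↑S} :=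
      ⟨{0,1}, LFP.card_two hn, good0⟩
    refine le_antisymm (Nat.sInf_le mem2) (le_csInf ⟨2, mem2⟩ ?_)
    rintro k ⟨S, rfl, hS⟩
    exact LFP.lower2 hn hS
  · have mem2 : 2 ∈ {k | ∃ S : Finset (Fin n), S.card = k ∧
        LF.IsLeakyForcingSet (LF.cycleGraph n) 1 ↑S} :=
      ⟨{0,1}, LFP.card_two hn, good1⟩
    refine le_antisymm (Nat.sInf_le mem2) (le_csInf ⟨2, mem2⟩ ?_)
    rintro k ⟨S, rfl, hS⟩
    exact LFP.lower2 hn (fun L h v => hS L (by omega) v)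
  · intro ℓ hℓ
    have memn : n ∈ {k | ∃ S : Finset (Fin n), S.card = k ∧
        LF.IsLeakyForcingSet (LF.cycleGraph n) ℓ ↑S} :=
      ⟨Finset.univ, by rw [Finset.card_univ, Fintype.card_fin], LFP.leaky_univ ℓ⟩
    refine le_antisymm (Nat.sInf_le memn) (le_csInf ⟨n, memn⟩ ?_)
    rintro k ⟨S, rfl, hS⟩
    exact LFP.lowern hn hℓ hS
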